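/- The weighted total-variance objective K(π) = ∫₀^τ W(t)·Var(t, π) dt is convex on the interval [0, 1]. -/
import Mathlib

open Set MeasureTheory

/-- Convexity of the inverse function on positive reals, binary form. -/
lemma inv_convex_aux {x y a b : ℝ} (hx : 0 < x) (hy : 0 < y) (ha : 0 ≤ a) (hb : 0 ≤ b)
    (hab : a + b = 1) : (a * x + b * y)⁻¹ ≤ a * x⁻¹ + b * y⁻¹ := by
  have hb' : b = 1 - a := by linarith
  subst hb'
  have hxy : 0 < a * x + (1 - a) * y := by
    rcases le_total x y with h | h
    · nlinarith [mul_nonneg hb (sub_nonneg.mpr h)]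
    · nlinarith [mul_nonneg ha (sub_nonneg.mpr h)]
  have h : a * x⁻¹ + (1 - a) * y⁻¹ = (a * y + (1 - a) * x) / (x * y) := by
    field_simp
  rw [h, inv_eq_one_div, div_le_div_iff₀ hxy (by positivity)]
  nlinarith [mul_nonneg (mul_nonneg ha hb) (sq_nonneg (x - y))]

/-- The weighted total-variance objective K(π) = ∫₀^τ W(t)·Var(t, π) dt is
convex on [0, 1]. -/
theorem weighted_objective_convexOn
    (τ θ n c : ℝ) (hτ : 0 < τ) (hθ : 0 < θ) (hn : 0 < n) (hc : 0 < c)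
    (f S qP qI : ℝ → ℝ)
    (hf_cont : ContinuousOn f (Set.Icc 0 τ)) (hS_cont : ContinuousOn S (Set.Icc 0 τ))
    (hqP_cont : ContinuousOn qP (Set.Icc 0 τ)) (hqI_cont : ContinuousOn qI (Set.Icc 0 τ))
    (hf_pos : ∀ r ∈ Set.Icc (0:ℝ) τ, 0 < f r) (hS_pos : ∀ r ∈ Set.Icc (0:ℝ) τ, 0 < S r)
    (hqP_pos : ∀ r ∈ Set.Icc (0:ℝ) τ, 0 < qP r) (hqI_pos : ∀ r ∈ Set.Icc (0:ℝ) τ, 0 < qI r)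
    (ψ : ℝ → ℝ) (hψ : ∀ r, ψ r = qI r - qP r)
    (Y : ℝ → ℝ → ℝ) (hY : ∀ r p, Y r p = n * S r * ((1 - p) * qP r + p * qI r))
    (hY_pos : ∀ p ∈ Set.Icc (0:ℝ) 1, ∀ r ∈ Set.Icc (0:ℝ) τ, 0 < Y r p)
    (Var : ℝ → ℝ → ℝ)
    (hVar : ∀ t p, Var t p = S t ^ 2 * ∫ r in (0:ℝ)..t, f r / (Y r p * S r))
(W : ℝ → ℝ) (hW_cont : ContinuousOn W (Set.Icc 0 τ))
    (hW_pos : ∀ t ∈ Set.Icc (0:ℝ) τ, 0 < W t)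
    (hW_int : (∫ t in (0:ℝ)..τ, W t) = 1)
    (V : ℝ → ℝ → ℝ)
    (hV : ∀ t p, V t p = S t ^ 2 * ∫ r in (0:ℝ)..t, f r * ψ r / (Y r p) ^ 2)
    (K : ℝ → ℝ) (hK : ∀ p, K p = ∫ t in (0:ℝ)..τ, W t * Var t p)
    : ConvexOn ℝ (Set.Icc (0:ℝ) 1) K := by
  refine ⟨convex_Icc 0 1, ?_⟩
  intro p hp q hq a b ha hb hab
  simp only [smul_eq_mul]
  set π := a * p + b * q with hπdef
  have hπ : π ∈ Icc (0:ℝ) 1 := (convex_Icc (0:ℝ) 1) hp hq ha hb hab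
  -- continuity of r ↦ Y r u
  have hYcont : ∀ u : ℝ, ContinuousOn (fun r => Y r u) (Icc 0 τ) := by
    intro u
    have : ContinuousOn (fun r => n * S r * ((1 - u) * qP r + u * qI r)) (Icc 0 τ) :=
      (continuousOn_const.mul hS_cont).mul
        ((continuousOn_const.mul hqP_cont).add (continuousOn_const.mul hqI_cont))
    exact this.congr (fun r _ => hY r u)
  -- continuity of the inner integrand
  have hgcont : ∀ u ∈ Icc (0:ℝ) 1, ContinuousOn (fun r => f r / (Y r u * S r)) (Icc 0 τ) := by
    intro u hu
    exact hf_cont.div ((hYcont u).mul hS_cont)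
      (fun r hr => (mul_pos (hY_pos u hu r hr) (hS_pos r hr)).ne')
  -- Y is affine in the mixing parameter
  have hYaffine : ∀ r, Y r π = a * Y r p + b * Y r q := by
    intro r
    rw [hY, hY, hY, hπdef]
    have hb' : b = 1 - a := by linarith
    subst hb'
    ring
  -- inner-integral convexity inequality
  have inner : ∀ t ∈ Icc (0:ℝ) τ,
      (∫ r in (0:ℝ)..t, f r / (Y r π * S r)) ≤
        a * (∫ r in (0:ℝ)..t, f r / (Y r p * S r)) +
          b * (∫ r in (0:ℝ)..t, f r / (Y r q * S r)) := by
    intro t ht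
    have hsub : Icc (0:ℝ) t ⊆ Icc 0 τ := Icc_subset_Icc le_rfl ht.2
    have hu : uIcc (0:ℝ) t = Icc 0 t := uIcc_of_le ht.1
    have husub : uIcc (0:ℝ) t ⊆ Icc 0 τ := by rw [hu]; exact hsub
    have intπ : IntervalIntegrable (fun r => f r / (Y r π * S r)) volume 0 t :=
      ((hgcont π hπ).mono husub).intervalIntegrable
    have intp : IntervalIntegrable (fun r => f r / (Y r p * S r)) volume 0 t :=
      ((hgcont p hp).mono husub).intervalIntegrable
    have intq : IntervalIntegrable (fun r => f r / (Y r q * S r)) volume 0 t :=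
      ((hgcont q hq).mono husub).intervalIntegrable
    rw [← intervalIntegral.integral_const_mul, ← intervalIntegral.integral_const_mul,
      ← intervalIntegral.integral_add (intp.const_mul a) (intq.const_mul b)]
    apply intervalIntegral.integral_mono_on ht.1 intπ
      ((intp.const_mul a).add (intq.const_mul b))
    intro r hr
    have hrτ : r ∈ Icc 0 τ := hsub hr
    have hYp := hY_pos p hp r hrτ
    have hYq := hY_pos q hq r hrτ
    have hfr := (hf_pos r hrτ).le
    have hSr := hS_pos r hrτ
    have hinv := inv_convex_aux hYp hYq ha hb hab
    have hcn : 0 ≤ f r / S r := div_nonneg hfr hSr.le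
    have e : ∀ Z : ℝ, f r / (Z * S r) = (f r / S r) * Z⁻¹ := by
      intro Z
      rw [div_eq_mul_inv, mul_inv, div_eq_mul_inv]
      ring
    simp only [e, hYaffine r]
    nlinarith [mul_le_mul_of_nonneg_left hinv hcn]
  -- continuity of t ↦ W t * Var t u, hence interval integrability
  have hWVint : ∀ u ∈ Icc (0:ℝ) 1,
      IntervalIntegrable (fun t => W t * Var t u) volume 0 τ := by
    intro u hu
    have hprim : ContinuousOn (fun t => ∫ r in (0:ℝ)..t, f r / (Y r u * S r)) (Icc 0 τ) := by
      have h1 : IntegrableOn (fun r => f r / (Y r u * S r)) (uIcc (0:ℝ) τ) volume := by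
        rw [uIcc_of_le hτ.le]
        exact (hgcont u hu).integrableOn_compact isCompact_Icc
      have := intervalIntegral.continuousOn_primitive_interval h1
      rwa [uIcc_of_le hτ.le] at this
    have hVarc : ContinuousOn (fun t => Var t u) (Icc 0 τ) :=
      ((hS_cont.pow 2).mul hprim).congr (fun t _ => hVar t u)
    have : ContinuousOn (fun t => W t * Var t u) (Icc 0 τ) := hW_cont.mul hVarc
    exact (this.mono (by rw [uIcc_of_le hτ.le])).intervalIntegrable
  -- assemble
  rw [hK, hK, hK]
  have intπ := hWVint π hπ
  have intp := hWVint p hp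
  have intq := hWVint q hq
  calc (∫ t in (0:ℝ)..τ, W t * Var t π)
      ≤ ∫ t in (0:ℝ)..τ, (a * (W t * Var t p) + b * (W t * Var t q)) := by
        apply intervalIntegral.integral_mono_on hτ.le intπ
          ((intp.const_mul a).add (intq.const_mul b))
        intro t ht
        have hS2 : (0:ℝ) ≤ S t ^ 2 := sq_nonneg _
        have hWt := (hW_pos t ht).le
        have h1 := inner t ht
        have h2 := mul_le_mul_of_nonneg_left h1 hS2
        rw [hVar, hVar, hVar]
        nlinarith [mul_le_mul_of_nonneg_left h2 hWt]
    _ = a * (∫ t in (0:ℝ)..τ, W t * Var t p) + b * (∫ t in (0:ℝ)..τ, W t * Var t q) := by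
        rw [intervalIntegral.integral_add (intp.const_mul a) (intq.const_mul b),
          intervalIntegral.integral_const_mul, intervalIntegral.integral_const_mul]
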